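/- For any polynomial p : [0,∞) → [0,∞) with rational coefficients, the smooth sign function H_p(x,z) = sgn(x)·z, defined on the domain U_p = {(0,0)} ∪ {(x,z) ∈ ℝ* × ℝ : |z/x| ≤ e^{p(‖(x,z)‖)}} (where ℝ* = ℝ∖{0} and sgn(x) is the sign of x, with sgn(0) = 0), is poly-length-computable. -/

import Mathlib

/-- The length of the curve `y` between times `0` and `t`
(using one-sided derivatives on `[0, ∞)` and the sup norm). -/
noncomputable def curveLen {d : ℕ} (y : ℝ → Fin d → ℝ) (t : ℝ) : ℝ :=
  ∫ u in (0:ℝ)..t, ‖derivWithin y (Set.Ici 0) u‖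

/-- `f :⊆ ℝⁿ → ℝᵐ` with domain `dom` is poly-length-computable. -/
def PolyLengthComputable (n m : ℕ) (dom : Set (Fin n → ℝ))
    (f : (Fin n → ℝ) → Fin m → ℝ) : Prop :=
  ∃ (d : ℕ) (hd : m ≤ d) (p : Fin d → MvPolynomial (Fin d) ℚ)
    (q : Fin d → MvPolynomial (Fin n) ℚ) (Ω : MvPolynomial (Fin 2) ℝ),
    (∀ α μ : ℝ, 0 ≤ α → 0 ≤ μ → 0 ≤ MvPolynomial.eval ![α, μ] Ω) ∧
    ∀ x ∈ dom, ∃ y : ℝ → Fin d → ℝ,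
      (∀ i, y 0 i = MvPolynomial.aeval x (q i)) ∧
      (∀ t : ℝ, 0 ≤ t →
        HasDerivWithinAt y (fun i => MvPolynomial.aeval (y t) (p i)) (Set.Ici 0) t) ∧
      (∀ t : ℝ, 0 ≤ t → ∀ μ : ℝ, 0 ≤ μ →
        MvPolynomial.eval ![‖x‖, μ] Ω ≤ curveLen y t →
        ‖(fun j : Fin m => y t (Fin.castLE hd j)) - f x‖ ≤ Real.exp (-μ)) ∧
      (∀ t : ℝ, 0 ≤ t → t ≤ curveLen y t)


open MvPolynomial in
private noncomputable def ssPoly : Fin 7 → MvPolynomial (Fin 7) ℚ :=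
  ![X 2 * X 3 * X 6 - X 2 * X 3 * X 0 * X 1,
    X 2 * X 3 - X 2 * X 3 * X 1 ^ 2,
    X 2 * X 3, X 3, 1, 0, 0]

open MvPolynomial in
private noncomputable def ssInit : Fin 7 → MvPolynomial (Fin 2) ℚ :=
  ![0, 0, X 0, 1, 0, X 0, X 1]

/-- explicit hyperbolic tangent -/
noncomputable def tnh (s : ℝ) : ℝ := (Real.exp (2*s) - 1)/(Real.exp (2*s) + 1)

lemma tnh_zero : tnh 0 = 0 := by simp [tnh]

lemma exp_add_one_pos (s : ℝ) : (0:ℝ) < Real.exp (2*s) + 1 := by positivity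

lemma tnh_hasDerivAt (s : ℝ) : HasDerivAt tnh (1 - tnh s ^ 2) s := by
  have h1 : HasDerivAt (fun s : ℝ => Real.exp (2*s) - 1)
      (Real.exp (2*s) * 2) s := by
    simpa using (((hasDerivAt_id s).const_mul (2:ℝ)).exp.sub_const 1)
  have h2 : HasDerivAt (fun s : ℝ => Real.exp (2*s) + 1)
      (Real.exp (2*s) * 2) s := by
    simpa using (((hasDerivAt_id s).const_mul (2:ℝ)).exp.add_const 1)
  have := h1.div h2 (exp_add_one_pos s).ne'
  refine this.congr_deriv ?_
  have hpos := exp_add_one_pos s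
  unfold tnh
  field_simp [tnh]
  ring

lemma tnh_neg (s : ℝ) : tnh (-s) = - tnh s := by
  have h1 := Real.exp_pos (2*s)
  have h2 := Real.exp_pos (-(2*s))
  have hm : Real.exp (2*s) * Real.exp (-(2*s)) = 1 := by
    rw [← Real.exp_add]; simp
  unfold tnh
  rw [show 2 * -s = -(2*s) by ring]
  field_simp
  nlinarith [hm]

lemma tnh_nonneg {s : ℝ} (hs : 0 ≤ s) : 0 ≤ tnh s := by
  have : (1:ℝ) ≤ Real.exp (2*s) := Real.one_le_exp (by linarith)
  have h2 := exp_add_one_pos s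
  unfold tnh
  apply div_nonneg (by linarith) (by linarith)

lemma tnh_lt_one (s : ℝ) : tnh s < 1 := by
  have := exp_add_one_pos s
  rw [tnh, div_lt_one this]; linarith

lemma tnh_sq_le_one (s : ℝ) : tnh s ^ 2 ≤ 1 := by
  have h1 := tnh_lt_one s
  have h2 := tnh_lt_one (-s)
  rw [tnh_neg] at h2
  nlinarith

lemma one_sub_tnh_le {s : ℝ} (hs : 0 ≤ s) : 1 - tnh s ≤ 2 * Real.exp (-(2*s)) := by
  have h1 := exp_add_one_pos s
  have hm : Real.exp (2*s) * Real.exp (-(2*s)) = 1 := by rw [← Real.exp_add]; simp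
  have h2 : 1 - tnh s = 2 / (Real.exp (2*s) + 1) := by
    rw [tnh]; field_simp; ring
  rw [h2]
  rw [div_le_iff₀ h1]
  nlinarith [Real.exp_pos (-(2*s))]

lemma tnh_continuous : Continuous tnh := by
  unfold tnh
  fun_prop (disch := intro x; positivity)

lemma err_le_one {x0 s : ℝ} (hs : 0 ≤ s) : |tnh (x0*s) - Real.sign x0| ≤ 1 := by
  rcases lt_trichotomy x0 0 with h | h | h
  · rw [Real.sign_of_neg h]
    have hr : 0 ≤ -x0 * s := by nlinarith
    have h1 : tnh (x0 * s) = - tnh (-x0 * s) := by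
      rw [← tnh_neg]; ring_nf
    rw [h1]
    have h2 := tnh_nonneg hr
    have h3 := tnh_lt_one (-x0 * s)
    rw [abs_le]; constructor <;> nlinarith
  · simp [h, tnh_zero, Real.sign_zero]
  · rw [Real.sign_of_pos h]
    have hr : 0 ≤ x0 * s := by positivity
    have h2 := tnh_nonneg hr
    have h3 := tnh_lt_one (x0 * s)
    rw [abs_le]; constructor <;> nlinarith

lemma err_le_exp {x0 s : ℝ} (hs : 0 ≤ s) (hx : x0 ≠ 0) :
    |tnh (x0*s) - Real.sign x0| ≤ 2 * Real.exp (-(2 * (|x0| * s))) := by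
  rcases lt_trichotomy x0 0 with h | h | h
  · rw [Real.sign_of_neg h, abs_of_neg h]
    have hr : 0 ≤ -x0 * s := by nlinarith
    have h1 : tnh (x0 * s) = - tnh (-x0 * s) := by
      rw [← tnh_neg]; ring_nf
    rw [h1]
    have h2 := tnh_nonneg hr
    have h4 := one_sub_tnh_le hr
    rw [show -tnh (-x0*s) - (-1) = 1 - tnh (-x0*s) by ring, abs_of_nonneg (by nlinarith [tnh_lt_one (-x0*s)])]
    exact h4
  · exact absurd h hx
  · rw [Real.sign_of_pos h, abs_of_pos h]
    have hr : 0 ≤ x0 * s := by positivity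
    have h2 := tnh_nonneg hr
    have h4 := one_sub_tnh_le hr
    rw [show tnh (x0*s) - 1 = -(1 - tnh (x0*s)) by ring, abs_neg,
      abs_of_nonneg (by nlinarith [tnh_lt_one (x0*s)])]
    exact h4

noncomputable def curveY (x0 x1 : ℝ) : ℝ → Fin 7 → ℝ := fun t =>
  ![x1 * tnh (x0 * (Real.exp (Real.exp t - 1) - 1)),
    tnh (x0 * (Real.exp (Real.exp t - 1) - 1)),
    x0 * Real.exp (Real.exp t - 1),
    Real.exp t, t, x0, x1]

noncomputable def curveV (x0 x1 : ℝ) : ℝ → Fin 7 → ℝ := fun t =>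
  ![x1 * (x0 * (Real.exp t * Real.exp (Real.exp t - 1)) * (1 - tnh (x0 * (Real.exp (Real.exp t - 1) - 1)) ^ 2)),
    x0 * (Real.exp t * Real.exp (Real.exp t - 1)) * (1 - tnh (x0 * (Real.exp (Real.exp t - 1) - 1)) ^ 2),
    x0 * (Real.exp t * Real.exp (Real.exp t - 1)),
    Real.exp t, 1, 0, 0]

lemma expE_hasDerivAt (t : ℝ) :
    HasDerivAt (fun t => Real.exp (Real.exp t - 1))
      (Real.exp t * Real.exp (Real.exp t - 1)) t := by
  simpa [mul_comm] using ((Real.hasDerivAt_exp t).sub_const 1).exp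

lemma inner_hasDerivAt (x0 t : ℝ) :
    HasDerivAt (fun t => x0 * (Real.exp (Real.exp t - 1) - 1))
      (x0 * (Real.exp t * Real.exp (Real.exp t - 1))) t :=
  ((expE_hasDerivAt t).sub_const 1).const_mul x0

lemma a_hasDerivAt (x0 t : ℝ) :
    HasDerivAt (fun t => tnh (x0 * (Real.exp (Real.exp t - 1) - 1)))
      (x0 * (Real.exp t * Real.exp (Real.exp t - 1)) *
        (1 - tnh (x0 * (Real.exp (Real.exp t - 1) - 1)) ^ 2)) t := by
  have := (tnh_hasDerivAt (x0 * (Real.exp (Real.exp t - 1) - 1))).comp t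
    (inner_hasDerivAt x0 t)
  refine this.congr_deriv ?_
  ring

lemma cv5 (x0 x1 t : ℝ) : curveV x0 x1 t 5 = 0 := rfl
lemma cv6 (x0 x1 t : ℝ) : curveV x0 x1 t 6 = 0 := rfl

lemma curveY_hasDerivAt (x0 x1 t : ℝ) :
    HasDerivAt (curveY x0 x1) (curveV x0 x1 t) t := by
  rw [hasDerivAt_pi]
  intro i
  fin_cases i
  · exact ((a_hasDerivAt x0 t).const_mul x1).congr_deriv
      (by simp [curveV, Matrix.cons_val_succ]; try ring)
  · exact (a_hasDerivAt x0 t).congr_deriv (by simp [curveV, Matrix.cons_val_succ])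
  · exact ((expE_hasDerivAt t).const_mul x0).congr_deriv
      (by simp [curveV, Matrix.cons_val_succ]; try ring)
  · exact (Real.hasDerivAt_exp t).congr_deriv (by simp [curveV, Matrix.cons_val_succ])
  · exact (hasDerivAt_id t).congr_deriv (by simp [curveV, Matrix.cons_val_succ])
  · exact (hasDerivAt_const t x0).congr_deriv (cv5 x0 x1 t).symm
  · exact (hasDerivAt_const t x1).congr_deriv (cv6 x0 x1 t).symm

lemma curveV_continuous (x0 x1 : ℝ) : Continuous (curveV x0 x1) := by
  have ha : Continuous fun t : ℝ => tnh (x0 * (Real.exp (Real.exp t - 1) - 1)) :=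
    tnh_continuous.comp (by fun_prop)
  unfold curveV
  refine continuous_pi fun i => ?_
  fin_cases i
  · exact (show Continuous fun a : ℝ => x1 * (x0 * (Real.exp a * Real.exp (Real.exp a - 1)) * (1 - tnh (x0 * (Real.exp (Real.exp a - 1) - 1)) ^ 2)) by fun_prop)
  · exact (show Continuous fun a : ℝ => x0 * (Real.exp a * Real.exp (Real.exp a - 1)) * (1 - tnh (x0 * (Real.exp (Real.exp a - 1) - 1)) ^ 2) by fun_prop)
  · exact (show Continuous fun a : ℝ => x0 * (Real.exp a * Real.exp (Real.exp a - 1)) by fun_prop)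
  · exact Real.continuous_exp
  · exact continuous_const
  · exact continuous_const
  · exact continuous_const

lemma derivWithin_curveY (x0 x1 : ℝ) {u : ℝ} (hu : 0 ≤ u) :
    derivWithin (curveY x0 x1) (Set.Ici 0) u = curveV x0 x1 u :=
  (curveY_hasDerivAt x0 x1 u).hasDerivWithinAt.derivWithin (uniqueDiffOn_Ici 0 u hu)

lemma curveLen_eq (x0 x1 : ℝ) {t : ℝ} (ht : 0 ≤ t) :
    curveLen (curveY x0 x1) t = ∫ u in (0:ℝ)..t, ‖curveV x0 x1 u‖ := by
  unfold curveLen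
  apply intervalIntegral.integral_congr
  intro u hu
  rw [Set.uIcc_of_le ht] at hu
  simp only
  rw [derivWithin_curveY x0 x1 hu.1]

lemma curveV_norm_lower (x0 x1 u : ℝ) : 1 ≤ ‖curveV x0 x1 u‖ := by
  have h := norm_le_pi_norm (curveV x0 x1 u) 4
  have h4 : curveV x0 x1 u 4 = 1 := rfl
  rw [h4] at h
  simpa using h

lemma curveV_norm_upper (x0 x1 : ℝ) {u : ℝ} (hu : 0 ≤ u) :
    ‖curveV x0 x1 u‖ ≤ 1 + Real.exp u +
      (2 + |x1|) * (|x0| * (Real.exp u * Real.exp (Real.exp u - 1))) := by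
  set g := Real.exp u * Real.exp (Real.exp u - 1) with hg
  have hgpos : 0 < g := by rw [hg]; positivity
  have heu : 0 < Real.exp u := Real.exp_pos u
  set a := tnh (x0 * (Real.exp (Real.exp u - 1) - 1)) with ha
  have ha1 : 0 ≤ 1 - a ^ 2 := by nlinarith [tnh_sq_le_one (x0 * (Real.exp (Real.exp u - 1) - 1))]
  have ha2 : 1 - a ^ 2 ≤ 1 := by nlinarith [sq_nonneg a]
  have hx0g : 0 ≤ |x0| * g := mul_nonneg (abs_nonneg x0) hgpos.le
  have hx1x0g : 0 ≤ |x1| * (|x0| * g) := mul_nonneg (abs_nonneg x1) hx0g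
  have hexp : (2 + |x1|) * (|x0| * g) = 2 * (|x0| * g) + |x1| * (|x0| * g) := by ring
  have hkey : |x0| * g * (1 - a ^ 2) ≤ |x0| * g := by nlinarith
  have hrhs : (0:ℝ) ≤ 1 + Real.exp u + (2 + |x1|) * (|x0| * g) := by positivity
  rw [pi_norm_le_iff_of_nonneg hrhs]
  intro i
  fin_cases i
  · show |x1 * (x0 * g * (1 - a ^ 2))| ≤ _
    rw [abs_mul, abs_mul, abs_mul, abs_of_pos hgpos, abs_of_nonneg ha1]
    have h1 : |x1| * (|x0| * g * (1 - a ^ 2)) ≤ |x1| * (|x0| * g) :=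
      mul_le_mul_of_nonneg_left hkey (abs_nonneg x1)
    linarith
  · show |x0 * g * (1 - a ^ 2)| ≤ _
    rw [abs_mul, abs_mul, abs_of_pos hgpos, abs_of_nonneg ha1]
    linarith
  · show |x0 * g| ≤ _
    rw [abs_mul, abs_of_pos hgpos]
    linarith
  · show |Real.exp u| ≤ _
    rw [abs_of_pos heu]
    linarith
  · show |(1:ℝ)| ≤ _
    rw [abs_one]
    linarith
  · show |(0:ℝ)| ≤ _
    rw [abs_zero]; positivity
  · show |(0:ℝ)| ≤ _
    rw [abs_zero]; positivity

lemma curveLen_lower (x0 x1 : ℝ) {t : ℝ} (ht : 0 ≤ t) :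
    t ≤ curveLen (curveY x0 x1) t := by
  rw [curveLen_eq x0 x1 ht]
  have hInt : IntervalIntegrable (fun u => ‖curveV x0 x1 u‖) MeasureTheory.volume 0 t :=
    ((curveV_continuous x0 x1).norm).intervalIntegrable 0 t
  calc t = ∫ _ in (0:ℝ)..t, (1:ℝ) := by simp
    _ ≤ ∫ u in (0:ℝ)..t, ‖curveV x0 x1 u‖ := by
        apply intervalIntegral.integral_mono_on ht (by simp [intervalIntegrable_const]) hInt
        intro u _
        exact curveV_norm_lower x0 x1 u

lemma curveLen_upper (x0 x1 : ℝ) {t : ℝ} (ht : 0 ≤ t) :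
    curveLen (curveY x0 x1) t ≤ t + (Real.exp t - 1) +
      (2 + |x1|) * (|x0| * (Real.exp (Real.exp t - 1) - 1)) := by
  rw [curveLen_eq x0 x1 ht]
  set C := (2 + |x1|) * |x0| with hC
  have hCnn : 0 ≤ C := by positivity
  have hS : Continuous (fun u : ℝ => 1 + Real.exp u + C * (Real.exp u * Real.exp (Real.exp u - 1))) := by fun_prop
  have hInt : IntervalIntegrable (fun u => ‖curveV x0 x1 u‖) MeasureTheory.volume 0 t :=
    ((curveV_continuous x0 x1).norm).intervalIntegrable 0 t
  have h1 : (∫ u in (0:ℝ)..t, ‖curveV x0 x1 u‖) ≤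
      ∫ u in (0:ℝ)..t, (1 + Real.exp u + C * (Real.exp u * Real.exp (Real.exp u - 1))) := by
    apply intervalIntegral.integral_mono_on ht hInt (hS.intervalIntegrable 0 t)
    intro u _
    rename_i hu
    have := curveV_norm_upper x0 x1 hu.1
    rw [hC]
    calc ‖curveV x0 x1 u‖ ≤ _ := this
      _ = 1 + Real.exp u + (2 + |x1|) * |x0| * (Real.exp u * Real.exp (Real.exp u - 1)) := by ring
  have h2 : (∫ u in (0:ℝ)..t, (1 + Real.exp u + C * (Real.exp u * Real.exp (Real.exp u - 1))))
      = (t + Real.exp t + C * Real.exp (Real.exp t - 1)) - (0 + Real.exp 0 + C * Real.exp (Real.exp 0 - 1)) := by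
    apply intervalIntegral.integral_eq_sub_of_hasDerivAt
    · intro u _
      exact ((hasDerivAt_id u).add (Real.hasDerivAt_exp u)).add ((expE_hasDerivAt u).const_mul C)
    · exact hS.intervalIntegrable 0 t
  rw [h2] at h1
  simp only [Real.exp_zero] at h1
  calc (∫ u in (0:ℝ)..t, ‖curveV x0 x1 u‖) ≤ _ := h1
    _ = t + (Real.exp t - 1) + C * (Real.exp (Real.exp t - 1) - 1) := by simp; ring
    _ = t + (Real.exp t - 1) + (2 + |x1|) * (|x0| * (Real.exp (Real.exp t - 1) - 1)) := by rw [hC]; ring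


open MvPolynomial in
noncomputable def OmegaPoly (P : Polynomial ℚ) : MvPolynomial (Fin 2) ℝ :=
  C 10 + C 10 * X 0 + C 10 * X 1 + C 10 * (X 0 * X 1) + C 10 * X 0 ^ 2 +
    C 2 * Polynomial.eval₂ MvPolynomial.C (X 0) (P.map (algebraMap ℚ ℝ))

lemma OmegaPoly_eval (P : Polynomial ℚ) (α μ : ℝ) :
    MvPolynomial.eval ![α, μ] (OmegaPoly P) =
      10 + 10*α + 10*μ + 10*(α*μ) + 10*α^2 + 2*(Polynomial.aeval α P) := by
  have h : (MvPolynomial.eval ![α, μ])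
      (Polynomial.eval₂ MvPolynomial.C (MvPolynomial.X 0) (P.map (algebraMap ℚ ℝ)))
      = Polynomial.aeval α P := by
    rw [Polynomial.hom_eval₂]
    have h1 : (MvPolynomial.eval ![α, μ]).comp (MvPolynomial.C : ℝ →+* MvPolynomial (Fin 2) ℝ)
        = RingHom.id ℝ := by ext r; simp
    have h2 : MvPolynomial.eval ![α, μ] (MvPolynomial.X 0) = α := by simp
    rw [h1, h2, Polynomial.aeval_def, ← Polynomial.eval_map, ← Polynomial.eval_map,
      Polynomial.map_id]
  simp [OmegaPoly, h]

lemma cy0 (x0 x1 t : ℝ) : curveY x0 x1 t 0 = x1 * tnh (x0 * (Real.exp (Real.exp t - 1) - 1)) := rfl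
lemma cy1 (x0 x1 t : ℝ) : curveY x0 x1 t 1 = tnh (x0 * (Real.exp (Real.exp t - 1) - 1)) := rfl
lemma cy2 (x0 x1 t : ℝ) : curveY x0 x1 t 2 = x0 * Real.exp (Real.exp t - 1) := rfl
lemma cy3 (x0 x1 t : ℝ) : curveY x0 x1 t 3 = Real.exp t := rfl
lemma cy4 (x0 x1 t : ℝ) : curveY x0 x1 t 4 = t := rfl
lemma cy5 (x0 x1 t : ℝ) : curveY x0 x1 t 5 = x0 := rfl
lemma cy6 (x0 x1 t : ℝ) : curveY x0 x1 t 6 = x1 := rfl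


set_option maxHeartbeats 2000000 in
/-- For any polynomial p : [0,∞) → [0,∞) with rational coefficients, the smooth sign
function H_p(x,z) = sgn(x)·z on the domain
U_p = {(0,0)} ∪ {(x,z) : x ≠ 0, |z/x| ≤ e^(p(‖(x,z)‖))} is poly-length-computable. -/
theorem smoothSign_polyLengthComputable (P : Polynomial ℚ)
    (hP : ∀ α : ℝ, 0 ≤ α → 0 ≤ Polynomial.aeval α P) :
    PolyLengthComputable 2 1
      ({v : Fin 2 → ℝ | v 0 = 0 ∧ v 1 = 0} ∪
        {v : Fin 2 → ℝ | v 0 ≠ 0 ∧ |v 1 / v 0| ≤ Real.exp (Polynomial.aeval ‖v‖ P)})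
      (fun v _ => Real.sign (v 0) * v 1) := by
  refine ⟨7, by norm_num, ssPoly, ssInit, OmegaPoly P, ?_, ?_⟩
  · intro α μ hα hμ
    rw [OmegaPoly_eval]
    nlinarith [hP α hα, mul_nonneg hα hμ, sq_nonneg α]
  intro x hx
  refine ⟨curveY (x 0) (x 1), ?_, ?_, ?_, fun t ht => curveLen_lower (x 0) (x 1) ht⟩
  · -- initial condition
    intro i
    fin_cases i
    · rw [show (⟨0, by omega⟩ : Fin 7) = (0 : Fin 7) from rfl, cy0,
        show ssInit 0 = 0 from rfl]
      simp [tnh_zero]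
    · rw [show (⟨1, by omega⟩ : Fin 7) = (1 : Fin 7) from rfl, cy1,
        show ssInit 1 = 0 from rfl]
      simp [tnh_zero]
    · rw [show (⟨2, by omega⟩ : Fin 7) = (2 : Fin 7) from rfl, cy2,
        show ssInit 2 = MvPolynomial.X 0 from rfl]
      simp
    · rw [show (⟨3, by omega⟩ : Fin 7) = (3 : Fin 7) from rfl, cy3,
        show ssInit 3 = 1 from rfl]
      simp
    · rw [show (⟨4, by omega⟩ : Fin 7) = (4 : Fin 7) from rfl, cy4,
        show ssInit 4 = 0 from rfl]
      simp
    · rw [show (⟨5, by omega⟩ : Fin 7) = (5 : Fin 7) from rfl, cy5,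
        show ssInit 5 = MvPolynomial.X 0 from rfl]
      simp
    · rw [show (⟨6, by omega⟩ : Fin 7) = (6 : Fin 7) from rfl, cy6,
        show ssInit 6 = MvPolynomial.X 1 from rfl]
      simp
  · -- derivative condition
    intro t ht
    have hfun : (fun i => (MvPolynomial.aeval (curveY (x 0) (x 1) t) (ssPoly i) : ℝ))
        = curveV (x 0) (x 1) t := by
      funext i
      fin_cases i
      · rw [show (⟨0, by omega⟩ : Fin 7) = (0 : Fin 7) from rfl,
          show ssPoly 0 = MvPolynomial.X 2 * MvPolynomial.X 3 * MvPolynomial.X 6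
            - MvPolynomial.X 2 * MvPolynomial.X 3 * MvPolynomial.X 0 * MvPolynomial.X 1 from rfl]
        simp only [map_sub, map_mul, MvPolynomial.aeval_X, cy0, cy1, cy2, cy3, cy6]
        show _ = curveV (x 0) (x 1) t 0
        rw [show curveV (x 0) (x 1) t 0 = x 1 * (x 0 * (Real.exp t * Real.exp (Real.exp t - 1)) * (1 - tnh (x 0 * (Real.exp (Real.exp t - 1) - 1)) ^ 2)) from rfl]
        ring
      · rw [show (⟨1, by omega⟩ : Fin 7) = (1 : Fin 7) from rfl,
          show ssPoly 1 = MvPolynomial.X 2 * MvPolynomial.X 3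
            - MvPolynomial.X 2 * MvPolynomial.X 3 * MvPolynomial.X 1 ^ 2 from rfl]
        simp only [map_sub, map_mul, map_pow, MvPolynomial.aeval_X, cy1, cy2, cy3]
        show _ = curveV (x 0) (x 1) t 1
        rw [show curveV (x 0) (x 1) t 1 = x 0 * (Real.exp t * Real.exp (Real.exp t - 1)) * (1 - tnh (x 0 * (Real.exp (Real.exp t - 1) - 1)) ^ 2) from rfl]
        ring
      · rw [show (⟨2, by omega⟩ : Fin 7) = (2 : Fin 7) from rfl,
          show ssPoly 2 = MvPolynomial.X 2 * MvPolynomial.X 3 from rfl]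
        simp only [map_mul, MvPolynomial.aeval_X, cy2, cy3]
        show _ = curveV (x 0) (x 1) t 2
        rw [show curveV (x 0) (x 1) t 2 = x 0 * (Real.exp t * Real.exp (Real.exp t - 1)) from rfl]
        ring
      · rw [show (⟨3, by omega⟩ : Fin 7) = (3 : Fin 7) from rfl,
          show ssPoly 3 = MvPolynomial.X 3 from rfl]
        simp only [MvPolynomial.aeval_X, cy3]
        rfl
      · rw [show (⟨4, by omega⟩ : Fin 7) = (4 : Fin 7) from rfl,
          show ssPoly 4 = 1 from rfl]
        simp only [map_one]
        rfl
      · rw [show (⟨5, by omega⟩ : Fin 7) = (5 : Fin 7) from rfl,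
          show ssPoly 5 = 0 from rfl]
        simp only [map_zero]
        rfl
      · rw [show (⟨6, by omega⟩ : Fin 7) = (6 : Fin 7) from rfl,
          show ssPoly 6 = 0 from rfl]
        simp only [map_zero]
        rfl
    rw [hfun]
    exact (curveY_hasDerivAt (x 0) (x 1) t).hasDerivWithinAt
  · -- error bound
    intro t ht μ hμ hlen
    rw [OmegaPoly_eval] at hlen
    set α : ℝ := ‖x‖ with hαdef
    have hα : 0 ≤ α := norm_nonneg x
    have hPα : 0 ≤ Polynomial.aeval α P := hP α hα
    set Pa : ℝ := Polynomial.aeval α P with hPadef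
    have hx0α : |x 0| ≤ α := by
      simpa [Real.norm_eq_abs] using norm_le_pi_norm x 0
    have hx1α : |x 1| ≤ α := by
      simpa [Real.norm_eq_abs] using norm_le_pi_norm x 1
    set s : ℝ := Real.exp (Real.exp t - 1) - 1 with hsdef
    have hexpt1 : (1:ℝ) ≤ Real.exp t := Real.one_le_exp ht
    have hs : 0 ≤ s := by
      rw [hsdef]
      have : (1:ℝ) ≤ Real.exp (Real.exp t - 1) := Real.one_le_exp (by linarith)
      linarith
    rw [pi_norm_le_iff_of_nonneg (Real.exp_pos (-μ)).le]
    intro j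
    fin_cases j
    simp only [Pi.sub_apply]
    rw [show (Fin.castLE (by norm_num) (⟨0, by omega⟩ : Fin 1) : Fin 7) = 0 from rfl, cy0,
      ← hsdef, Real.norm_eq_abs,
      show x 1 * tnh (x 0 * s) - Real.sign (x 0) * x 1
        = x 1 * (tnh (x 0 * s) - Real.sign (x 0)) from by ring, abs_mul]
    by_cases h1 : |x 1| ≤ Real.exp (-μ)
    · calc |x 1| * |tnh (x 0 * s) - Real.sign (x 0)| ≤ |x 1| * 1 :=
        mul_le_mul_of_nonneg_left (err_le_one hs) (abs_nonneg _)
      _ ≤ Real.exp (-μ) := by rwa [mul_one]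
    · push_neg at h1
      have hx1ne : x 1 ≠ 0 := by
        intro h
        rw [h, abs_zero] at h1
        exact absurd h1 (Real.exp_pos (-μ)).not_gt
      rcases hx with hA | hB
      · exact absurd hA.2 hx1ne
      obtain ⟨hx0ne, hdiv⟩ := hB
      have hx0pos : 0 < |x 0| := abs_pos.mpr hx0ne
      rw [abs_div, div_le_iff₀ hx0pos] at hdiv
      by_contra hcon
      push_neg at hcon
      have herr2 := err_le_exp hs hx0ne
      set c : ℝ := |x 0| * s with hcdef
      have hc0 : 0 ≤ c := mul_nonneg (abs_nonneg _) hs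
      have hcon2 : Real.exp (-μ) < |x 1| * (2 * Real.exp (-(2 * c))) :=
        lt_of_lt_of_le hcon (mul_le_mul_of_nonneg_left herr2 (abs_nonneg _))
      have e1 : Real.exp (2*c) * Real.exp (-(2*c)) = 1 := by
        rw [← Real.exp_add]; simp
      have e2 : Real.exp (2*c) * Real.exp (-μ) = Real.exp (2*c - μ) := by
        rw [← Real.exp_add]; ring_nf
      have h3 : Real.exp (2*c - μ) < 2 * |x 1| := by
        have hmm := mul_lt_mul_of_pos_left hcon2 (Real.exp_pos (2*c))
        rw [e2] at hmm
        calc Real.exp (2*c - μ) < Real.exp (2*c) * (|x 1| * (2 * Real.exp (-(2*c)))) := hmm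
          _ = 2 * |x 1| * (Real.exp (2*c) * Real.exp (-(2*c))) := by ring
          _ = 2 * |x 1| := by rw [e1]; ring
      have h4 : 2*c - μ + 1 ≤ Real.exp (2*c - μ) := Real.add_one_le_exp _
      have hcB : 2*c < μ + 2*α := by
        have : 2*c - μ + 1 < 2*|x 1| := lt_of_le_of_lt h4 h3
        linarith
      have hBpos : 0 < μ + 2*α := by
        have hax : 0 < |x 1| := abs_pos.mpr hx1ne
        linarith [lt_of_lt_of_le hax hx1α]
      have hKpos : 0 < Real.exp (μ + Pa) := Real.exp_pos _
      have hx0lb : Real.exp (-μ) < |x 0| * Real.exp Pa := by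
        calc Real.exp (-μ) < |x 1| := h1
          _ ≤ Real.exp Pa * |x 0| := hdiv
          _ = |x 0| * Real.exp Pa := by ring
      have hx0K : 1 < |x 0| * Real.exp (μ + Pa) := by
        have hmm := mul_lt_mul_of_pos_left hx0lb (Real.exp_pos μ)
        calc (1:ℝ) = Real.exp μ * Real.exp (-μ) := by rw [← Real.exp_add]; simp
          _ < Real.exp μ * (|x 0| * Real.exp Pa) := hmm
          _ = |x 0| * Real.exp (μ + Pa) := by rw [Real.exp_add]; ring
      have hsK : 2 * s < (μ + 2*α) * Real.exp (μ + Pa) := by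
        rcases eq_or_lt_of_le hs with heq | hspos
        · rw [← heq]; simpa using mul_pos hBpos hKpos
        · have step1 : 2 * s < 2 * s * (|x 0| * Real.exp (μ + Pa)) := by
            nlinarith
          have step2 : 2 * s * (|x 0| * Real.exp (μ + Pa)) = (2 * c) * Real.exp (μ + Pa) := by
            rw [hcdef]; ring
          have step3 : (2 * c) * Real.exp (μ + Pa) < (μ + 2*α) * Real.exp (μ + Pa) :=
            mul_lt_mul_of_pos_right hcB hKpos
          linarith
      have hBK : Real.exp (Real.exp t - 1) < Real.exp (Real.log (1 + (μ + 2*α)/2) + (μ + Pa)) := by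
        have hEt : Real.exp (Real.exp t - 1) = s + 1 := by rw [hsdef]; ring
        have h5 : s + 1 < 1 + ((μ + 2*α)/2) * Real.exp (μ + Pa) := by nlinarith [hsK]
        have h6 : 1 + ((μ + 2*α)/2) * Real.exp (μ + Pa) ≤ (1 + (μ + 2*α)/2) * Real.exp (μ + Pa) := by
          have hK1 : (1:ℝ) ≤ Real.exp (μ + Pa) := Real.one_le_exp (by linarith)
          nlinarith
        rw [hEt, Real.exp_add, Real.exp_log (by linarith : (0:ℝ) < 1 + (μ + 2*α)/2)]
        linarith
      have h7 : Real.exp t - 1 < Real.log (1 + (μ + 2*α)/2) + (μ + Pa) := Real.exp_lt_exp.mp hBK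
      have h8 : Real.log (1 + (μ + 2*α)/2) ≤ (μ + 2*α)/2 := by
        have := Real.log_le_sub_one_of_pos (show (0:ℝ) < 1 + (μ + 2*α)/2 by linarith)
        linarith
      have hexpt : Real.exp t - 1 < (μ + 2*α)/2 + μ + Pa := by linarith
      have htb : t ≤ Real.exp t - 1 := by linarith [Real.add_one_le_exp t]
      have hlenup := curveLen_upper (x 0) (x 1) ht
      rw [← hsdef, ← hcdef] at hlenup
      have h9 : (2 + |x 1|) * c ≤ (2 + α) * c :=
        mul_le_mul_of_nonneg_right (by linarith) hc0
      have h10 : (2 + α) * c < (2 + α) * ((μ + 2*α)/2) := by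
        apply mul_lt_mul_of_pos_left (by linarith) (by linarith)
      have hfinal : curveLen (curveY (x 0) (x 1)) t
          < ((μ + 2*α)/2 + μ + Pa) + ((μ + 2*α)/2 + μ + Pa) + (2 + α) * ((μ + 2*α)/2) := by
        calc curveLen (curveY (x 0) (x 1)) t
            ≤ t + (Real.exp t - 1) + (2 + |x 1|) * c := hlenup
          _ < ((μ + 2*α)/2 + μ + Pa) + ((μ + 2*α)/2 + μ + Pa) + (2 + α) * ((μ + 2*α)/2) := by linarith
      nlinarith [mul_nonneg hα hμ, sq_nonneg α, hlen, hfinal]
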